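/- If λ = 1 + ε with ε → 0⁺ and λ* = λ(1 − ρ_λ), then λ* = 1 − ε + O(ε²), i.e. there exist constants C, ε₀ > 0 such that |λ* − (1 − ε)| ≤ Cε² for 0 < ε < ε₀. -/
import Mathlib

set_option maxHeartbeats 1000000 in
theorem dual_asymptotics :
    ∃ C ε₀ : ℝ, 0 < C ∧ 0 < ε₀ ∧
      ∀ ε ρ : ℝ, 0 < ε → ε < ε₀ → 0 < ρ →
        1 - ρ = Real.exp (-(1 + ε) * ρ) →
          |(1 + ε) * (1 - ρ) - (1 - ε)| ≤ C * ε ^ 2 := by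
  refine ⟨50, 0.1, by norm_num, by norm_num, fun ε ρ hε hε₀ hρ heq => ?_⟩
  have hexp := Real.exp_pos (-(1 + ε) * ρ)
  rw [← heq] at hexp
  have hρ1 : ρ < 1 := by linarith
  have hρ9 : ρ ≤ 0.9 := by
    by_contra h
    push_neg at h
    have h1 : Real.exp (-1.1) ≤ Real.exp (-(1 + ε) * ρ) := by
      apply Real.exp_le_exp.mpr
      nlinarith
    have h2 : (0.1 : ℝ) < Real.exp (-1.1) := by
      have h10 : Real.exp 1.1 < 10 := by
        have he1 : Real.exp 1 < 2.7182818286 := Real.exp_one_lt_d9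
        calc Real.exp 1.1 ≤ Real.exp 2 := Real.exp_le_exp.mpr (by norm_num)
          _ = Real.exp 1 * Real.exp 1 := by rw [← Real.exp_add]; norm_num
          _ < 10 := by nlinarith [Real.exp_pos 1]
      rw [Real.exp_neg]
      have hp := Real.exp_pos 1.1
      nlinarith [mul_inv_cancel₀ hp.ne', inv_pos.2 hp]
    nlinarith [h2.trans_le h1]
  have hx : |(-(1 + ε) * ρ)| ≤ 1 := by
    rw [abs_le]; constructor <;> nlinarith
  have hb := Real.exp_bound hx (n := 3) (by norm_num)
  rw [← heq] at hb
  have hsum : ∑ m ∈ Finset.range 3, (-(1 + ε) * ρ) ^ m / (m.factorial : ℝ)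
      = 1 - (1 + ε) * ρ + (1 + ε) ^ 2 * ρ ^ 2 / 2 := by
    simp [Finset.sum_range_succ]
    ring
  rw [hsum] at hb
  have habs : |(-(1 + ε) * ρ)| = (1 + ε) * ρ := by
    rw [abs_of_nonpos (by nlinarith)]; ring
  rw [habs, abs_le] at hb
  obtain ⟨hA, hB⟩ := hb
  norm_num [Nat.factorial] at hA hB
  have c1 : ε * ρ ≥ (1 + ε) ^ 2 / 2 * ρ ^ 2 - 2 / 9 * (1 + ε) ^ 3 * ρ ^ 3 := by
    nlinarith [hA]
  have c2 : ε * ρ ≤ (1 + ε) ^ 2 / 2 * ρ ^ 2 + 2 / 9 * (1 + ε) ^ 3 * ρ ^ 3 := by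
    nlinarith [hB]
  have hl3 : (1 + ε) ^ 3 ≤ 1.331 := by nlinarith
  have hc : 2 / 9 * (1 + ε) ^ 3 * ρ ≤ 0.27 := by
    nlinarith [mul_nonneg (sub_nonneg.2 hl3) hρ.le]
  have hρ5 : ρ ≤ 5 * ε := by
    nlinarith [c1, mul_le_mul_of_nonneg_right hc (sq_nonneg ρ),
      mul_nonneg hε.le (sq_nonneg ρ), mul_pos hρ hρ]
  have c1' : ε ≥ (1 + ε) ^ 2 / 2 * ρ - 2 / 9 * (1 + ε) ^ 3 * ρ ^ 2 := by
    by_contra h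
    push_neg at h
    nlinarith [c1, mul_pos hρ hρ]
  have c2' : ε ≤ (1 + ε) ^ 2 / 2 * ρ + 2 / 9 * (1 + ε) ^ 3 * ρ ^ 2 := by
    by_contra h
    push_neg at h
    nlinarith [c2, mul_pos hρ hρ]
  have hρ2 : ρ ^ 2 ≤ 25 * ε ^ 2 := by
    nlinarith [mul_nonneg (sub_nonneg.2 hρ5) (by positivity : (0:ℝ) ≤ 5 * ε + ρ)]
  have hq : (1 + ε) ^ 3 * ρ ^ 2 ≤ 33.3 * ε ^ 2 := by
    nlinarith [mul_nonneg (sq_nonneg ρ) (sub_nonneg.2 hl3), hρ2]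
  rw [abs_le]
  constructor
  · nlinarith [c1', hq, mul_nonneg hε.le hρ.le,
      mul_nonneg (mul_nonneg hε.le hε.le) hρ.le]
  · nlinarith [c2', hq, mul_nonneg hε.le (sub_nonneg.2 hρ5),
      mul_nonneg (mul_nonneg hε.le hε.le) (sub_nonneg.2 hρ5),
      mul_nonneg (mul_nonneg hε.le hε.le) (le_of_lt (sub_pos.2 hε₀))]
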